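/- Let Ω ⊂ ℝⁿ be an open set and K ⊂ Ω a non-empty compact set. Let f(x) = dist²(x, K ∪ Ω^c) for x ∈ ℝⁿ and let f⁻_Ω̄ be its extension to closure(Ω) with value inf_Ω f on ∂Ω. Then for every x ∈ closure(Ω): ℳ(λ; K ∪ Ω^c)(x) = (1 + λ)·(f⁻_Ω̄(x) − C^l_{λ,Ω}(f⁻_Ω̄)(x)). -/
import Mathlib


noncomputable section
attribute [local instance] Classical.propDecidable

/-- Global lower Moreau envelope `M_λ(g)(x) = inf_{y∈ℝⁿ} {g(y) + λ|y−x|²}`. -/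
def moreauLower {n : ℕ} (lam : ℝ) (g : EuclideanSpace ℝ (Fin n) → ℝ)
    (x : EuclideanSpace ℝ (Fin n)) : ℝ :=
  ⨅ y : EuclideanSpace ℝ (Fin n), (g y + lam * ‖y - x‖ ^ 2)

/-- Global upper Moreau envelope `M^λ(g)(x) = sup_{y∈ℝⁿ} {g(y) − λ|y−x|²}`. -/
def moreauUpper {n : ℕ} (lam : ℝ) (g : EuclideanSpace ℝ (Fin n) → ℝ)
    (x : EuclideanSpace ℝ (Fin n)) : ℝ :=
  ⨆ y : EuclideanSpace ℝ (Fin n), (g y - lam * ‖y - x‖ ^ 2)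

/-- Local lower Moreau envelope `M_{λ,Ω}(g)(x) = inf_{y∈closure Ω} {g(y) + λ|y−x|²}`. -/
def moreauLowerLoc {n : ℕ} (lam : ℝ) (Ω : Set (EuclideanSpace ℝ (Fin n)))
    (g : EuclideanSpace ℝ (Fin n) → ℝ) (x : EuclideanSpace ℝ (Fin n)) : ℝ :=
  sInf ((fun y => g y + lam * ‖y - x‖ ^ 2) '' closure Ω)

/-- Local upper Moreau envelope `M^λ_Ω(g)(x) = sup_{y∈closure Ω} {g(y) − λ|y−x|²}`. -/
def moreauUpperLoc {n : ℕ} (lam : ℝ) (Ω : Set (EuclideanSpace ℝ (Fin n)))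
    (g : EuclideanSpace ℝ (Fin n) → ℝ) (x : EuclideanSpace ℝ (Fin n)) : ℝ :=
  sSup ((fun y => g y - lam * ‖y - x‖ ^ 2) '' closure Ω)

/-- The extension of `f` equal to `f` on `Ω` and to `inf_Ω f` off `Ω`
(this realizes both `f⁻_Ω̄` on `closure Ω` and `f⁻_ℝⁿ` on `ℝⁿ`). -/
def extMinus {n : ℕ} (Ω : Set (EuclideanSpace ℝ (Fin n)))
    (f : EuclideanSpace ℝ (Fin n) → ℝ) (x : EuclideanSpace ℝ (Fin n)) : ℝ :=
  if x ∈ Ω then f x else sInf (f '' Ω)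

/-- The extension of `f` equal to `f` on `Ω` and to `sup_Ω f` off `Ω`
(this realizes both `f⁺_Ω̄` on `closure Ω` and `f⁺_ℝⁿ` on `ℝⁿ`). -/
def extPlus {n : ℕ} (Ω : Set (EuclideanSpace ℝ (Fin n)))
    (f : EuclideanSpace ℝ (Fin n) → ℝ) (x : EuclideanSpace ℝ (Fin n)) : ℝ :=
  if x ∈ Ω then f x else sSup (f '' Ω)

/-- The quadratic multiscale medial axis map
`ℳ(λ; S)(x) = (1+λ)(dist²(x,S) − C^l_λ(dist²(·,S))(x))`, with
`C^l_λ(g) = M^λ(M_λ(g))`. -/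
def medialAxisMap {n : ℕ} (lam : ℝ) (S : Set (EuclideanSpace ℝ (Fin n)))
    (x : EuclideanSpace ℝ (Fin n)) : ℝ :=
  (1 + lam) * ((Metric.infDist x S) ^ 2
    - moreauUpper lam (moreauLower lam (fun y => (Metric.infDist y S) ^ 2)) x)

/-- For `Ω ⊂ ℝⁿ` open, `K ⊂ Ω` non-empty compact, `f = dist²(·, K ∪ Ωᶜ)` and its
extension `f⁻_Ω̄`, one has, for all `x ∈ closure Ω`,
`ℳ(λ; K ∪ Ωᶜ)(x) = (1+λ)(f⁻_Ω̄(x) − C^l_{λ,Ω}(f⁻_Ω̄)(x))`. -/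
theorem medialAxisMap_eq_local {n : ℕ} (Ω K : Set (EuclideanSpace ℝ (Fin n)))
    (hΩo : IsOpen Ω) (hK : IsCompact K) (hKne : K.Nonempty) (hKΩ : K ⊆ Ω)
    (lam : ℝ) (hlam : 0 < lam) :
    ∀ x ∈ closure Ω,
      medialAxisMap lam (K ∪ Ωᶜ) x
        = (1 + lam) * (extMinus Ω (fun y => (Metric.infDist y (K ∪ Ωᶜ)) ^ 2) x
            - moreauUpperLoc lam Ω (moreauLowerLoc lam Ω
                (extMinus Ω (fun y => (Metric.infDist y (K ∪ Ωᶜ)) ^ 2))) x) := by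
  classical
  set S : Set (EuclideanSpace ℝ (Fin n)) := K ∪ Ωᶜ with hS
  set f : EuclideanSpace ℝ (Fin n) → ℝ := fun y => (Metric.infDist y S) ^ 2 with hf
  obtain ⟨k₀, hk₀⟩ := hKne
  have hSne : S.Nonempty := ⟨k₀, Or.inl hk₀⟩
  have hf0 : ∀ y, 0 ≤ f y := fun y => sq_nonneg _
  -- f vanishes on S
  have hfS : ∀ y ∈ S, f y = 0 := by
    intro y hy
    simp [hf, Metric.infDist_zero_of_mem hy]
  have hfOc : ∀ y, y ∉ Ω → f y = 0 := fun y hy => hfS y (Or.inr hy)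
  -- extMinus Ω f = f
  have hext : extMinus Ω f = f := by
    funext y
    unfold extMinus
    by_cases hy : y ∈ Ω
    · simp [hy]
    · simp only [hy, if_false]
      rw [hfOc y hy]
      refine le_antisymm ?_ ?_
      · exact csInf_le ⟨0, fun r ⟨z, _, hz⟩ => hz ▸ hf0 z⟩
          ⟨k₀, hKΩ hk₀, hfS k₀ (Or.inl hk₀)⟩
      · exact le_csInf ⟨f k₀, k₀, hKΩ hk₀, rfl⟩ (fun r ⟨z, _, hz⟩ => hz ▸ hf0 z)
  have hclne : (closure Ω).Nonempty := ⟨k₀, subset_closure (hKΩ hk₀)⟩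
  -- lower envelope basics
  have hbl : ∀ x : EuclideanSpace ℝ (Fin n),
      BddBelow (Set.range fun y => f y + lam * ‖y - x‖ ^ 2) := by
    intro x
    exact ⟨0, fun r ⟨y, hy⟩ => hy ▸ add_nonneg (hf0 y)
      (mul_nonneg hlam.le (sq_nonneg _))⟩
  have hbl' : ∀ x : EuclideanSpace ℝ (Fin n),
      BddBelow ((fun y => f y + lam * ‖y - x‖ ^ 2) '' closure Ω) := by
    intro x
    exact ⟨0, fun r ⟨y, _, hy⟩ => hy ▸ add_nonneg (hf0 y)
      (mul_nonneg hlam.le (sq_nonneg _))⟩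
  set g : EuclideanSpace ℝ (Fin n) → ℝ := moreauLower lam f with hg
  have hg0 : ∀ y, 0 ≤ g y := by
    intro y
    exact le_ciInf fun z => add_nonneg (hf0 z) (mul_nonneg hlam.le (sq_nonneg _))
  have hgle : ∀ x y : EuclideanSpace ℝ (Fin n), g y ≤ f x + lam * ‖x - y‖ ^ 2 := by
    intro x y
    exact ciInf_le (hbl y) x
  have hglef : ∀ y, g y ≤ f y := by
    intro y
    have := hgle y y
    simpa using this
  have hgOc : ∀ y, y ∉ closure Ω → g y = 0 := by
    intro y hy
    have hyΩ : y ∉ Ω := fun h => hy (subset_closure h)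
    exact le_antisymm (by simpa [hfOc y hyΩ] using hglef y) (hg0 y)
  -- key: global lower = local lower on closure Ω
  have hkey : ∀ x ∈ closure Ω, g x = moreauLowerLoc lam Ω f x := by
    intro x hx
    refine le_antisymm ?_ ?_
    · refine le_csInf (hclne.image _) ?_
      rintro r ⟨y, _, rfl⟩
      exact ciInf_le (hbl x) y
    · refine le_ciInf fun y => ?_
      by_cases hy : y ∈ closure Ω
      · exact csInf_le (hbl' x) ⟨y, hy, rfl⟩
      · -- find a frontier point z with ‖z - x‖ ≤ ‖y - x‖, f z = 0
        have hne : closure Ω ≠ Set.univ := fun h => hy (h ▸ Set.mem_univ y)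
        obtain ⟨z, hzf, hzd⟩ := exists_mem_frontier_infDist_compl_eq_dist hx hne
        have hzc : z ∈ closure Ω := by
          have := hzf.1
          rwa [closure_closure] at this
        have hzΩ : z ∉ Ω := fun hz =>
          hzf.2 ((hΩo.subset_interior_iff.mpr subset_closure) hz)
        have hdist : ‖z - x‖ ≤ ‖y - x‖ := by
          have h1 : Metric.infDist x (closure Ω)ᶜ ≤ dist x y :=
            Metric.infDist_le_dist_of_mem hy
          rw [hzd] at h1
          calc ‖z - x‖ = dist x z := by rw [dist_eq_norm, norm_sub_rev]
          _ ≤ dist x y := h1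
          _ = ‖y - x‖ := by rw [dist_eq_norm, norm_sub_rev]
        calc sInf ((fun y => f y + lam * ‖y - x‖ ^ 2) '' closure Ω)
            ≤ f z + lam * ‖z - x‖ ^ 2 := csInf_le (hbl' x) ⟨z, hzc, rfl⟩
          _ = lam * ‖z - x‖ ^ 2 := by rw [hfOc z hzΩ, zero_add]
          _ ≤ lam * ‖y - x‖ ^ 2 := by
              apply mul_le_mul_of_nonneg_left _ hlam.le
              exact pow_le_pow_left₀ (norm_nonneg _) hdist 2
          _ ≤ f y + lam * ‖y - x‖ ^ 2 := le_add_of_nonneg_left (hf0 y)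
  intro x hx
  -- upper bounds for the sup sets
  have hbu : BddAbove (Set.range fun y => g y - lam * ‖y - x‖ ^ 2) := by
    refine ⟨f x, ?_⟩
    rintro r ⟨y, rfl⟩
    show g y - lam * ‖y - x‖ ^ 2 ≤ f x
    have h2 := hgle x y
    rw [norm_sub_rev x y] at h2
    linarith
  have hbu' : BddAbove ((fun y => moreauLowerLoc lam Ω f y - lam * ‖y - x‖ ^ 2) ''
      closure Ω) := by
    refine ⟨f x, ?_⟩
    rintro r ⟨y, hy, rfl⟩
    show moreauLowerLoc lam Ω f y - lam * ‖y - x‖ ^ 2 ≤ f x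
    rw [← hkey y hy]
    have h2 := hgle x y
    rw [norm_sub_rev x y] at h2
    linarith
  -- key 2: global upper of g = local upper of local lower, at x
  have hkey2 : moreauUpper lam g x
      = moreauUpperLoc lam Ω (moreauLowerLoc lam Ω f) x := by
    refine le_antisymm ?_ ?_
    · refine ciSup_le fun y => ?_
      by_cases hy : y ∈ closure Ω
      · rw [show g y = moreauLowerLoc lam Ω f y from hkey y hy]
        exact le_csSup hbu' ⟨y, hy, rfl⟩
      · calc g y - lam * ‖y - x‖ ^ 2 ≤ 0 := by
              rw [hgOc y hy]
              simp [mul_nonneg hlam.le (sq_nonneg _)]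
          _ ≤ moreauLowerLoc lam Ω f x - lam * ‖x - x‖ ^ 2 := by
              rw [← hkey x hx]
              simp [hg0 x]
          _ ≤ _ := le_csSup hbu' ⟨x, hx, rfl⟩
    · refine csSup_le (hclne.image _) ?_
      rintro r ⟨y, hy, rfl⟩
      show moreauLowerLoc lam Ω f y - lam * ‖y - x‖ ^ 2 ≤ moreauUpper lam g x
      rw [← hkey y hy]
      exact le_ciSup hbu y
  -- conclude
  rw [hext]
  unfold medialAxisMap
  rw [← hf, ← hg, hkey2]
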